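/- Let $f \in \mathcal{L}_2(T)$. Then there exists $g \in \mathcal{L}_2(1,1;\mathbb{R})$ whose restriction to $[0,T]$ equals $f$ if and only if $|f'(0)| \le \sqrt{2(1-|f(0)|)}$ and $|f'(T)| \le \sqrt{2(1-|f(T)|)}$. -/

import Mathlib

open Set Real

/-- Membership in Landau's class `𝓛₂(T)`. -/
def InL2 (T : ℝ) (f f' : ℝ → ℝ) : Prop :=
  (∀ t ∈ Icc 0 T, HasDerivWithinAt f (f' t) (Icc 0 T) t) ∧
  (∀ t ∈ Icc 0 T, |f t| ≤ 1) ∧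
  LipschitzOnWith 1 f' (Icc 0 T)


lemma sign_mul_abs' (b : ℝ) : Real.sign b * |b| = b := by
  rcases lt_trichotomy b 0 with h|h|h
  · rw [Real.sign_of_neg h, abs_of_neg h]; ring
  · simp [h]
  · rw [Real.sign_of_pos h, abs_of_pos h]; ring

lemma abs_sign_le (b : ℝ) : |Real.sign b| ≤ 1 := by
  rcases Real.sign_apply_eq b with h|h|h <;> rw [h] <;> norm_num

lemma hasDerivAt_maxsq (x : ℝ) : HasDerivAt (fun y : ℝ => max y 0 ^ 2) (2 * max x 0) x := by
  rcases lt_trichotomy x 0 with h|h|h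
  · have h0 : HasDerivAt (fun _ : ℝ => (0:ℝ)) (2 * max x 0) x := by
      rw [max_eq_right h.le, mul_zero]; exact hasDerivAt_const x 0
    refine h0.congr_of_eventuallyEq ?_
    filter_upwards [Iio_mem_nhds h] with y hy
    rw [max_eq_right (le_of_lt hy)]; norm_num
  · subst h
    rw [hasDerivAt_iff_isLittleO]
    have : ∀ y : ℝ, max y 0 ^ 2 - max 0 0 ^ 2 - (y - 0) • (2 * max (0:ℝ) 0) = max y 0 ^ 2 := by
      intro y; simp
    rw [Asymptotics.isLittleO_iff]
    intro c hc
    filter_upwards [Metric.ball_mem_nhds (0:ℝ) hc] with y hy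
    rw [Metric.mem_ball, Real.dist_eq, sub_zero] at hy
    rw [this y]
    have h1 : 0 ≤ max y 0 := le_max_right _ _
    have h2 : max y 0 ≤ |y| := max_le (le_abs_self y) (abs_nonneg y)
    have : ‖max y 0 ^ 2‖ = max y 0 ^ 2 := by
      rw [Real.norm_eq_abs, abs_of_nonneg (by positivity)]
    rw [this]
    have : ‖y - 0‖ = |y| := by rw [sub_zero, Real.norm_eq_abs]
    rw [this]
    nlinarith [abs_nonneg y]
  · have h0 : HasDerivAt (fun y : ℝ => y ^ 2) (2 * max x 0) x := by
      rw [max_eq_left h.le]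
      simpa using (hasDerivAt_pow 2 x)
    refine h0.congr_of_eventuallyEq ?_
    filter_upwards [Ioi_mem_nhds h] with y hy
    rw [max_eq_left (le_of_lt hy)]


noncomputable def tail (a b : ℝ) (u : ℝ) : ℝ :=
  a + Real.sign b * ((b ^ 2 - max (|b| - u) 0 ^ 2) / 2)

noncomputable def tail' (b : ℝ) (u : ℝ) : ℝ := Real.sign b * max (|b| - u) 0

lemma tail_zero (a b : ℝ) : tail a b 0 = a := by
  rw [tail, sub_zero, max_eq_left (abs_nonneg b), sq_abs]
  simp

lemma tail'_zero (b : ℝ) : tail' b 0 = b := by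
  rw [tail', sub_zero, max_eq_left (abs_nonneg b), sign_mul_abs']

lemma tail_hasDerivAt (a b u : ℝ) : HasDerivAt (tail a b) (tail' b u) u := by
  have h1 : HasDerivAt (fun u : ℝ => |b| - u) (-1) u := by
    simpa using (hasDerivAt_id' u).const_sub |b|
  have h2 : HasDerivAt (fun u : ℝ => max (|b| - u) 0 ^ 2) (2 * max (|b| - u) 0 * (-1)) u :=
    (hasDerivAt_maxsq (|b| - u)).comp u h1
  have h3 : HasDerivAt (tail a b)
      (Real.sign b * ((0 - 2 * max (|b| - u) 0 * (-1)) / 2)) u := by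
    unfold tail
    exact ((((hasDerivAt_const u (b ^ 2)).sub h2).div_const 2).const_mul
      (Real.sign b)).const_add a
  convert h3 using 1
  unfold tail'; ring

lemma tail_abs_le {a b : ℝ} (ha : |a| ≤ 1) (hb : b ^ 2 ≤ 2 * (1 - |a|))
    {u : ℝ} (hu : 0 ≤ u) : |tail a b u| ≤ 1 := by
  set m := max (|b| - u) 0 with hm
  have hm0 : 0 ≤ m := le_max_right _ _
  have hmb : m ≤ |b| := max_le (by linarith [abs_nonneg b]) (abs_nonneg b)
  have h1 : 0 ≤ (b ^ 2 - m ^ 2) / 2 := by nlinarith [sq_abs b]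
  have h2 : (b ^ 2 - m ^ 2) / 2 ≤ 1 - |a| := by nlinarith
  have hs := abs_le.mp (abs_sign_le b)
  have main : ∀ s c : ℝ, -1 ≤ s → s ≤ 1 → 0 ≤ c → c ≤ 1 - |a| → |a + s * c| ≤ 1 := by
    intro s c hs1 hs2 hc1 hc2
    rw [abs_le]
    constructor
    · nlinarith [neg_abs_le a, mul_nonneg (by linarith : (0:ℝ) ≤ s + 1) hc1]
    · nlinarith [le_abs_self a, mul_nonneg (by linarith : (0:ℝ) ≤ 1 - s) hc1]
  exact main _ _ hs.1 hs.2 h1 h2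

lemma abs_sign_mul_max_sub (b p q : ℝ) :
    |Real.sign b * max p 0 - Real.sign b * max q 0| ≤ |p - q| := by
  rw [← mul_sub, abs_mul]
  calc |Real.sign b| * |max p 0 - max q 0| ≤ 1 * |p - q| :=
        mul_le_mul (abs_sign_le b) (abs_max_sub_max_le_abs p q 0) (abs_nonneg _) zero_le_one
    _ = |p - q| := one_mul _

lemma lip_glue {K : NNReal} {f : ℝ → ℝ} (a : ℝ) {s : Set ℝ} (ha : a ∈ s)
    (h1 : LipschitzOnWith K f (s ∩ Iic a)) (h2 : LipschitzOnWith K f (s ∩ Ici a)) :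
    LipschitzOnWith K f s := by
  rw [lipschitzOnWith_iff_dist_le_mul] at h1 h2 ⊢
  intro x hx y hy
  rcases le_total x a with hxa | hxa <;> rcases le_total y a with hya | hya
  · exact h1 x ⟨hx, hxa⟩ y ⟨hy, hya⟩
  · calc dist (f x) (f y) ≤ dist (f x) (f a) + dist (f a) (f y) := dist_triangle _ _ _
      _ ≤ K * dist x a + K * dist a y :=
          add_le_add (h1 x ⟨hx, hxa⟩ a ⟨ha, le_refl a⟩) (h2 a ⟨ha, le_refl a⟩ y ⟨hy, hya⟩)
      _ = K * dist x y := by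
          rw [Real.dist_eq, Real.dist_eq, Real.dist_eq, abs_of_nonpos (by linarith),
            abs_of_nonpos (by linarith), abs_of_nonpos (by linarith)]
          ring
  · calc dist (f x) (f y) ≤ dist (f x) (f a) + dist (f a) (f y) := dist_triangle _ _ _
      _ ≤ K * dist x a + K * dist a y :=
          add_le_add (h2 x ⟨hx, hxa⟩ a ⟨ha, le_refl a⟩) (h1 a ⟨ha, le_refl a⟩ y ⟨hy, hya⟩)
      _ = K * dist x y := by
          rw [Real.dist_eq, Real.dist_eq, Real.dist_eq, abs_of_nonneg (by linarith),
            abs_of_nonneg (by linarith), abs_of_nonneg (by linarith)]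
          ring
  · exact h2 x ⟨hx, hxa⟩ y ⟨hy, hya⟩


lemma taylor_lower (g : ℝ → ℝ) (hdiff : Differentiable ℝ g)
    (hlip : LipschitzWith 1 (deriv g)) (x y : ℝ) :
    g x + (y - x) * deriv g x - (y - x) ^ 2 / 2 ≤ g y := by
  set c := deriv g x with hc
  set F : ℝ → ℝ := fun y => g y - (y - x) * c + (y - x) ^ 2 / 2 with hF
  have hFd : ∀ z : ℝ, HasDerivAt F (deriv g z - c + (z - x)) z := by
    intro z
    have h1 : HasDerivAt (fun y : ℝ => (y - x) * c) c z := by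
      simpa using ((hasDerivAt_id z).sub_const x).mul_const c
    have h2 : HasDerivAt (fun y : ℝ => (y - x) ^ 2 / 2) (z - x) z := by
      have h := (((hasDerivAt_id' z).sub_const x).pow 2).div_const 2
      exact h.congr_deriv (by norm_num)
    exact ((hdiff z).hasDerivAt.sub h1).add h2
  have hFdiff : Differentiable ℝ F := fun z => (hFd z).differentiableAt
  have hderivF : deriv F = fun z => deriv g z - c + (z - x) := funext fun z => (hFd z).deriv
  have hlip' : ∀ z : ℝ, |deriv g z - c| ≤ |z - x| := by
    intro z
    have := hlip.dist_le_mul z x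
    rwa [Real.dist_eq, Real.dist_eq, NNReal.coe_one, one_mul] at this
  have hmono : MonotoneOn F (Ici x) := by
    apply monotoneOn_of_deriv_nonneg (convex_Ici x) hFdiff.continuous.continuousOn
      hFdiff.differentiableOn
    intro z hz
    rw [interior_Ici] at hz
    rw [hderivF]
    show 0 ≤ deriv g z - c + (z - x)
    have := (abs_le.mp (hlip' z)).1
    have hzx : (0:ℝ) ≤ z - x := by simp at hz; linarith
    rw [abs_of_nonneg hzx] at this
    linarith
  have hanti : AntitoneOn F (Iic x) := by
    apply antitoneOn_of_deriv_nonpos (convex_Iic x) hFdiff.continuous.continuousOn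
      hFdiff.differentiableOn
    intro z hz
    rw [interior_Iic] at hz
    rw [hderivF]
    show deriv g z - c + (z - x) ≤ 0
    have := (abs_le.mp (hlip' z)).2
    have hzx : z - x ≤ 0 := by simp at hz; linarith
    rw [abs_of_nonpos hzx] at this
    linarith
  have key : F x ≤ F y := by
    rcases le_total x y with h | h
    · exact hmono self_mem_Ici h h
    · exact hanti h self_mem_Iic h
  have key2 : g x ≤ g y - (y - x) * c + (y - x) ^ 2 / 2 := by
    simpa [hF] using key
  linarith

lemma landau (g : ℝ → ℝ) (hdiff : Differentiable ℝ g)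
    (hlip : LipschitzWith 1 (deriv g)) (hb : ∀ t, |g t| ≤ 1) (x : ℝ) :
    |deriv g x| ≤ Real.sqrt (2 * (1 - |g x|)) := by
  set c := deriv g x with hc
  have taylor_upper : ∀ y : ℝ, g y ≤ g x + (y - x) * c + (y - x) ^ 2 / 2 := by
    intro y
    have hnd : Differentiable ℝ (fun t => -(g t)) := hdiff.neg
    have hnderiv : deriv (fun t => -(g t)) = fun t => -(deriv g t) :=
      funext fun t => deriv.neg
    have hnlip : LipschitzWith 1 (deriv (fun t => -(g t))) := by
      rw [hnderiv]
      apply LipschitzWith.of_dist_le_mul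
      intro a b
      simpa [dist_neg_neg] using hlip.dist_le_mul a b
    have := taylor_lower (fun t => -(g t)) hnd hnlip x y
    rw [hnderiv] at this
    simp only at this
    rw [← hc] at this
    nlinarith [this]
  have key : c ^ 2 ≤ 2 * (1 - |g x|) := by
    rcases le_or_gt 0 (g x) with h | h
    · have h1 := taylor_lower g hdiff hlip x (x + c)
      rw [← hc] at h1
      have h2 := (abs_le.mp (hb (x + c))).2
      rw [abs_of_nonneg h]
      nlinarith
    · have h1 := taylor_upper (x + (-c))
      have h2 := (abs_le.mp (hb (x + (-c)))).1
      rw [abs_of_neg h]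
      nlinarith
  calc |c| = Real.sqrt (c ^ 2) := (Real.sqrt_sq_eq_abs c).symm
    _ ≤ Real.sqrt (2 * (1 - |g x|)) := Real.sqrt_le_sqrt key

/-- **Extension criterion.** For `f ∈ 𝓛₂(T)`, there exists
`g ∈ 𝓛₂(1,1;ℝ)` whose restriction to `[0,T]` equals `f` if and only if
`|f'(0)| ≤ √(2(1 - |f(0)|))` and `|f'(T)| ≤ √(2(1 - |f(T)|))`. -/
theorem extension_criterion (T : ℝ) (hT : 0 < T) (f f' : ℝ → ℝ)
    (hf : InL2 T f f') :
    (∃ g : ℝ → ℝ, Differentiable ℝ g ∧ LipschitzWith 1 (deriv g) ∧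
        (∀ t : ℝ, |g t| ≤ 1) ∧ EqOn g f (Icc 0 T)) ↔
    (|f' 0| ≤ Real.sqrt (2 * (1 - |f 0|)) ∧
     |f' T| ≤ Real.sqrt (2 * (1 - |f T|))) := by
  obtain ⟨hder, hbd, hlip⟩ := hf
  have h0mem : (0:ℝ) ∈ Icc (0:ℝ) T := ⟨le_refl _, hT.le⟩
  have hTmem : T ∈ Icc (0:ℝ) T := ⟨hT.le, le_refl _⟩
  constructor
  · rintro ⟨g, hdiff, hlipg, hbg, heq⟩
    have hud := uniqueDiffOn_Icc hT
    have key : ∀ x ∈ Icc (0:ℝ) T, deriv g x = f' x := by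
      intro x hx
      have h1 : HasDerivWithinAt g (deriv g x) (Icc 0 T) x :=
        (hdiff x).hasDerivAt.hasDerivWithinAt
      have h2 : HasDerivWithinAt f (deriv g x) (Icc 0 T) x :=
        h1.congr (fun y hy => (heq hy).symm) (heq hx).symm
      have e1 := h2.derivWithin (hud x hx)
      have e2 := (hder x hx).derivWithin (hud x hx)
      rw [← e1]; exact e2
    constructor
    · rw [← heq h0mem, ← key 0 h0mem]; exact landau g hdiff hlipg hbg 0
    · rw [← heq hTmem, ← key T hTmem]; exact landau g hdiff hlipg hbg T
  · rintro ⟨h0, hT'⟩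
    have ha0 : |f 0| ≤ 1 := hbd 0 h0mem
    have haT : |f T| ≤ 1 := hbd T hTmem
    have hb0sq : (f' 0) ^ 2 ≤ 2 * (1 - |f 0|) := by
      have := (Real.le_sqrt (abs_nonneg (f' 0)) (by linarith)).mp h0
      rwa [sq_abs] at this
    have hbTsq : (f' T) ^ 2 ≤ 2 * (1 - |f T|) := by
      have := (Real.le_sqrt (abs_nonneg (f' T)) (by linarith)).mp hT'
      rwa [sq_abs] at this
    have hb0sq' : (-(f' 0)) ^ 2 ≤ 2 * (1 - |f 0|) := by nlinarith [hb0sq]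
    set G : ℝ → ℝ := fun t =>
      if t < 0 then tail (f 0) (-(f' 0)) (-t)
      else if t ≤ T then f t else tail (f T) (f' T) (t - T) with hG
    set G' : ℝ → ℝ := fun t =>
      if t < 0 then -(tail' (-(f' 0)) (-t))
      else if t ≤ T then f' t else tail' (f' T) (t - T) with hG'
    have hGeq : EqOn G f (Icc 0 T) := by
      intro t ht
      simp only [hG]
      rw [if_neg (not_lt.mpr ht.1), if_pos ht.2]
    have hG'eq : ∀ t ∈ Icc (0:ℝ) T, G' t = f' t := by
      intro t ht
      simp only [hG']
      rw [if_neg (not_lt.mpr ht.1), if_pos ht.2]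
    have hG'L : ∀ t : ℝ, t ≤ 0 → G' t = Real.sign (f' 0) * max (|f' 0| + t) 0 := by
      intro t ht
      rcases lt_or_eq_of_le ht with h' | h'
      · simp only [hG']
        rw [if_pos h', tail', Real.sign_neg, abs_neg, sub_neg_eq_add]
        ring
      · subst h'
        rw [hG'eq 0 h0mem, add_zero, max_eq_left (abs_nonneg _), sign_mul_abs']
    have hG'R : ∀ t : ℝ, T ≤ t → G' t = tail' (f' T) (t - T) := by
      intro t ht
      rcases lt_or_eq_of_le ht with h' | h'
      · simp only [hG']
        rw [if_neg (not_lt.mpr (by linarith : (0:ℝ) ≤ t)), if_neg (not_le.mpr h')]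
      · subst h'
        rw [hG'eq T hTmem, sub_self, tail'_zero]
    have hLder : ∀ t : ℝ,
        HasDerivAt (fun s : ℝ => tail (f 0) (-(f' 0)) (-s)) (-(tail' (-(f' 0)) (-t))) t := by
      intro t
      have h := (tail_hasDerivAt (f 0) (-(f' 0)) (-t)).comp t (hasDerivAt_neg t)
      have h2 : HasDerivAt (fun s : ℝ => tail (f 0) (-(f' 0)) (-s))
          (tail' (-(f' 0)) (-t) * (-1)) t := h
      convert h2 using 1
      ring
    have hRder : ∀ t : ℝ,
        HasDerivAt (fun s : ℝ => tail (f T) (f' T) (s - T)) (tail' (f' T) (t - T)) t := by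
      intro t
      have h := (tail_hasDerivAt (f T) (f' T) (t - T)).comp t ((hasDerivAt_id t).sub_const T)
      have h2 : HasDerivAt (fun s : ℝ => tail (f T) (f' T) (s - T))
          (tail' (f' T) (t - T) * 1) t := h
      convert h2 using 1
      ring
    have hG0 : G 0 = tail (f 0) (-(f' 0)) (-(0:ℝ)) := by
      rw [neg_zero, tail_zero]; exact hGeq h0mem
    have hGT : G T = tail (f T) (f' T) (T - T) := by
      rw [sub_self, tail_zero]; exact hGeq hTmem
    have hasG : ∀ t : ℝ, HasDerivAt G (G' t) t := by
      intro t
      rcases lt_trichotomy t 0 with ht | ht | ht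
      · have hGt : G' t = -(tail' (-(f' 0)) (-t)) := by
          simp only [hG']; rw [if_pos ht]
        rw [hGt]
        refine (hLder t).congr_of_eventuallyEq ?_
        filter_upwards [Iio_mem_nhds ht] with s hs
        simp only [hG]; rw [if_pos (mem_Iio.mp hs)]
      · subst ht
        rw [hG'eq 0 h0mem]
        have hIic : HasDerivWithinAt G (f' 0) (Iic 0) 0 := by
          have h := (hLder 0).hasDerivWithinAt (s := Iic 0)
          have hval : -(tail' (-(f' 0)) (-(0:ℝ))) = f' 0 := by
            rw [neg_zero, tail'_zero]; ring
          rw [hval] at h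
          refine h.congr ?_ hG0
          intro s hs
          rcases lt_or_eq_of_le (mem_Iic.mp hs) with h' | h'
          · simp only [hG]; rw [if_pos h']
          · subst h'; exact hG0
        have hIci : HasDerivWithinAt G (f' 0) (Ici 0) 0 := by
          have h := (hder 0 h0mem).congr (fun y hy => hGeq hy) (hGeq h0mem)
          exact h.mono_of_mem_nhdsWithin (Icc_mem_nhdsGE_of_mem ⟨le_refl (0:ℝ), hT⟩)
        have h := hIic.union hIci
        rw [Iic_union_Ici] at h
        rwa [hasDerivWithinAt_univ] at h
      · rcases lt_trichotomy t T with htT | htT | htT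
        · have hmem : t ∈ Icc (0:ℝ) T := ⟨ht.le, htT.le⟩
          rw [hG'eq t hmem]
          exact ((hder t hmem).congr (fun y hy => hGeq hy) (hGeq hmem)).hasDerivAt
            (Icc_mem_nhds ht htT)
        · subst htT
          rw [hG'eq t hTmem]
          have hIic : HasDerivWithinAt G (f' t) (Iic t) t := by
            have h := (hder t hTmem).congr (fun y hy => hGeq hy) (hGeq hTmem)
            exact h.mono_of_mem_nhdsWithin (Icc_mem_nhdsLE_of_mem ⟨hT, le_refl t⟩)
          have hIci : HasDerivWithinAt G (f' t) (Ici t) t := by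
            have h := (hRder t).hasDerivWithinAt (s := Ici t)
            rw [sub_self, tail'_zero] at h
            refine h.congr ?_ hGT
            intro s hs
            rcases lt_or_eq_of_le (mem_Ici.mp hs) with h' | h'
            · simp only [hG]
              rw [if_neg (not_lt.mpr (by linarith : (0:ℝ) ≤ s)), if_neg (not_le.mpr h')]
            · subst h'; exact hGT
          have h := hIic.union hIci
          rw [Iic_union_Ici] at h
          rwa [hasDerivWithinAt_univ] at h
        · rw [hG'R t htT.le]
          refine (hRder t).congr_of_eventuallyEq ?_
          filter_upwards [Ioi_mem_nhds htT] with s hs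
          have hs' := mem_Ioi.mp hs
          simp only [hG]
          rw [if_neg (not_lt.mpr (by linarith : (0:ℝ) ≤ s)), if_neg (not_le.mpr hs')]
    have hdiffG : Differentiable ℝ G := fun t => (hasG t).differentiableAt
    have hderivG : deriv G = G' := funext fun t => (hasG t).deriv
    have lipIic : LipschitzOnWith 1 G' (Iic 0) := by
      apply LipschitzOnWith.of_dist_le_mul
      intro x hx y hy
      rw [hG'L x hx, hG'L y hy, Real.dist_eq, Real.dist_eq, NNReal.coe_one, one_mul]
      calc |Real.sign (f' 0) * max (|f' 0| + x) 0 - Real.sign (f' 0) * max (|f' 0| + y) 0|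
          ≤ |(|f' 0| + x) - (|f' 0| + y)| := abs_sign_mul_max_sub _ _ _
        _ = |x - y| := by rw [show (|f' 0| + x) - (|f' 0| + y) = x - y from by ring]
    have lipIcc : LipschitzOnWith 1 G' (Icc 0 T) := by
      apply LipschitzOnWith.of_dist_le_mul
      intro x hx y hy
      rw [hG'eq x hx, hG'eq y hy]
      exact hlip.dist_le_mul x hx y hy
    have lipIci : LipschitzOnWith 1 G' (Ici T) := by
      apply LipschitzOnWith.of_dist_le_mul
      intro x hx y hy
      rw [hG'R x hx, hG'R y hy, Real.dist_eq, Real.dist_eq, NNReal.coe_one, one_mul,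
        tail', tail']
      calc |Real.sign (f' T) * max (|f' T| - (x - T)) 0 -
            Real.sign (f' T) * max (|f' T| - (y - T)) 0|
          ≤ |(|f' T| - (x - T)) - (|f' T| - (y - T))| := abs_sign_mul_max_sub _ _ _
        _ = |x - y| := by
            rw [show (|f' T| - (x - T)) - (|f' T| - (y - T)) = -(x - y) from by ring, abs_neg]
    have lipIci0 : LipschitzOnWith 1 G' (Ici 0) := by
      refine lip_glue T (mem_Ici.mpr hT.le) ?_ (lipIci.mono inter_subset_right)
      exact lipIcc.mono (fun x hx => ⟨hx.1, hx.2⟩)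
    have lipAll : LipschitzWith 1 G' := by
      rw [← lipschitzOnWith_univ]
      exact lip_glue 0 (mem_univ 0) (lipIic.mono inter_subset_right)
        (lipIci0.mono inter_subset_right)
    have hbG : ∀ t : ℝ, |G t| ≤ 1 := by
      intro t
      rcases lt_trichotomy t 0 with ht | ht | ht
      · simp only [hG]; rw [if_pos ht]
        exact tail_abs_le ha0 hb0sq' (by linarith)
      · subst ht; rw [hGeq h0mem]; exact ha0
      · rcases le_or_gt t T with htT | htT
        · rw [hGeq ⟨ht.le, htT⟩]; exact hbd t ⟨ht.le, htT⟩
        · simp only [hG]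
          rw [if_neg (not_lt.mpr ht.le), if_neg (not_le.mpr htT)]
          exact tail_abs_le haT hbTsq (by linarith)
    exact ⟨G, hdiffG, by rw [hderivG]; exact lipAll, hbG, hGeq⟩
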